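/- Let K ⊂ ℝ be a connected set (interval) and f : K → ℝ a non-negative function in L²(γ₁, K) with connected level sets {f > t}. Then ∫_K f(x) x² dγ₁(x) ≤ ∫_{H_K} f*(x) x² dγ₁(x), where f* is the Ehrhard rearrangement of f onto the left half-line H_K of the same one-dimensional Gaussian measure as K. -/

import Mathlib

open MeasureTheory Real Set

/-- The one-dimensional standard Gaussian measure. -/
noncomputable def stdGaussian1 : Measure ℝ :=
  volume.withDensity fun x =>
    ENNReal.ofReal ((2 * π) ^ (-(1 : ℝ) / 2) * Real.exp (-x ^ 2 / 2))

noncomputable def gdens (x : ℝ) : ENNReal :=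
  ENNReal.ofReal ((2 * π) ^ (-(1 : ℝ) / 2) * Real.exp (-x ^ 2 / 2))

lemma gdens_meas : Measurable gdens := by
  apply Measurable.ennreal_ofReal
  fun_prop

lemma stdGaussian1_eq : stdGaussian1 = volume.withDensity gdens := rfl

lemma stdGaussian1_apply (s : Set ℝ) (hs : MeasurableSet s) :
    stdGaussian1 s = ∫⁻ x in s, gdens x := by
  rw [stdGaussian1_eq, withDensity_apply _ hs]

lemma gdens_neg (x : ℝ) : gdens (-x) = gdens x := by
  simp [gdens, neg_sq]

instance : IsFiniteMeasure stdGaussian1 := by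
  constructor
  rw [stdGaussian1_eq, withDensity_apply _ MeasurableSet.univ, Measure.restrict_univ]
  have hint : Integrable (fun x : ℝ => (2 * π) ^ (-(1 : ℝ) / 2) * Real.exp (-x ^ 2 / 2)) := by
    have h := (integrable_exp_neg_mul_sq (by norm_num : (0:ℝ) < 1/2)).const_mul
      ((2 * π) ^ (-(1 : ℝ) / 2))
    convert h using 2 with x
    ring_nf
  have h0 : 0 ≤ᵐ[volume] fun x : ℝ => (2 * π) ^ (-(1 : ℝ) / 2) * Real.exp (-x ^ 2 / 2) := by
    refine ae_of_all _ fun x => ?_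
    positivity
  exact (hasFiniteIntegral_iff_ofReal h0).1 hint.hasFiniteIntegral

lemma stdGaussian1_ac : stdGaussian1 ≪ (volume : Measure ℝ) :=
  withDensity_absolutelyContinuous _ _

lemma stdGaussian1_sym (α : ℝ) : stdGaussian1 (Iio (-α)) = stdGaussian1 (Ioi α) := by
  rw [stdGaussian1_apply _ measurableSet_Iio, stdGaussian1_apply _ measurableSet_Ioi]
  have hmp : MeasurePreserving (fun x : ℝ => -x) volume volume :=
    Measure.measurePreserving_neg _
  have hemb : MeasurableEmbedding (fun x : ℝ => -x) :=
    (Homeomorph.neg ℝ).measurableEmbedding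
  have h := hmp.setLIntegral_comp_preimage_emb hemb gdens (Iio (-α))
  rw [show (fun x : ℝ => -x) ⁻¹' Iio (-α) = Ioi α by ext x; simp] at h
  rw [← h]
  exact lintegral_congr fun x => gdens_neg x

lemma stdGaussian1_singleton (x : ℝ) : stdGaussian1 {x} = 0 :=
  stdGaussian1_ac (by simp)

lemma key_ineq {A H : Set ℝ} (hAm : MeasurableSet A) (hHm : MeasurableSet H)
    (hA : A.OrdConnected) (hH : ∀ ⦃x⦄, x ∈ H → ∀ ⦃y⦄, y ≤ x → y ∈ H)
    (hm : stdGaussian1 A = stdGaussian1 H) {α : ℝ} (hα : 0 ≤ α) :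
    stdGaussian1 (A ∩ (Iio (-α) ∪ Ioi α)) ≤ stdGaussian1 (H ∩ (Iio (-α) ∪ Ioi α)) := by
  set γ := stdGaussian1 with hγ
  have hTm : MeasurableSet (Iio (-α) ∪ Ioi α) :=
    measurableSet_Iio.union measurableSet_Ioi
  have hTc : (Iio (-α) ∪ Ioi α)ᶜ = Icc (-α) α := by
    rw [Set.compl_union, compl_Iio, compl_Ioi, Set.Ici_inter_Iic]
  -- lower bounds on the H side
  have hHlow : γ (Iio (-α)) ≤ γ (H ∩ (Iio (-α) ∪ Ioi α)) ∨
      γ H ≤ γ (H ∩ (Iio (-α) ∪ Ioi α)) := by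
    by_cases hex : ∃ x ∈ H, -α < x
    · left
      obtain ⟨x, hxH, hx⟩ := hex
      refine measure_mono fun y hy => ?_
      exact ⟨hH hxH (le_trans hy.le hx.le), Or.inl hy⟩
    · right
      push_neg at hex
      have hsub : H \ {-α} ⊆ H ∩ (Iio (-α) ∪ Ioi α) := fun y hy =>
        ⟨hy.1, Or.inl (lt_of_le_of_ne (hex y hy.1) hy.2)⟩
      calc γ H = γ (H \ {-α}) := (measure_diff_null (stdGaussian1_singleton _)).symm
        _ ≤ _ := measure_mono hsub
  by_cases h1 : (A ∩ Iio (-α)).Nonempty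
  · by_cases h2 : (A ∩ Ioi α).Nonempty
    · -- spanning case
      obtain ⟨a, haA, ha⟩ := h1
      obtain ⟨b, hbA, hb⟩ := h2
      have hIcc : Icc (-α) α ⊆ A := fun x hx =>
        hA.out haA hbA ⟨le_trans ha.le hx.1, le_trans hx.2 hb.le⟩
      have hATc : A ∩ (Iio (-α) ∪ Ioi α)ᶜ = Icc (-α) α := by
        rw [hTc]
        exact Set.Subset.antisymm Set.inter_subset_right
          (Set.subset_inter hIcc Set.Subset.rfl)
      have hsplitA : γ (A ∩ (Iio (-α) ∪ Ioi α)) + γ (Icc (-α) α) = γ A := by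
        rw [← hATc, ← Set.diff_eq]
        exact measure_inter_add_diff A hTm
      have hsplitH : γ (H ∩ (Iio (-α) ∪ Ioi α)) + γ (H ∩ (Iio (-α) ∪ Ioi α)ᶜ) = γ H := by
        rw [← Set.diff_eq]
        exact measure_inter_add_diff H hTm
      have hHc : γ (H ∩ (Iio (-α) ∪ Ioi α)ᶜ) ≤ γ (Icc (-α) α) := by
        refine measure_mono ?_
        rw [hTc]; exact Set.inter_subset_right
      have : γ (A ∩ (Iio (-α) ∪ Ioi α)) + γ (Icc (-α) α)
          ≤ γ (H ∩ (Iio (-α) ∪ Ioi α)) + γ (Icc (-α) α) := by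
        rw [hsplitA, hm, ← hsplitH]
        exact add_le_add le_rfl hHc
      exact (ENNReal.add_le_add_iff_right (measure_ne_top γ _)).mp this
    · -- A misses the right tail
      have hAe : A ∩ Ioi α = ∅ := Set.not_nonempty_iff_eq_empty.mp h2
      have hAT : A ∩ (Iio (-α) ∪ Ioi α) = A ∩ Iio (-α) := by
        rw [Set.inter_union_distrib_left, hAe, Set.union_empty]
      rw [hAT]
      rcases hHlow with h | h
      · exact le_trans (measure_mono Set.inter_subset_right) h
      · exact le_trans (le_trans (measure_mono Set.inter_subset_left) hm.le) h
  · -- A misses the left tail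
    have hAe : A ∩ Iio (-α) = ∅ := Set.not_nonempty_iff_eq_empty.mp h1
    have hAT : A ∩ (Iio (-α) ∪ Ioi α) = A ∩ Ioi α := by
      rw [Set.inter_union_distrib_left, hAe, Set.empty_union]
    rw [hAT]
    rcases hHlow with h | h
    · refine le_trans (le_trans (measure_mono Set.inter_subset_right) ?_) h
      exact (stdGaussian1_sym α).symm.le
    · exact le_trans (le_trans (measure_mono Set.inter_subset_left) hm.le) h

lemma sq_levelset {s : ℝ} (hs : 0 < s) :
    {x : ℝ | s < x ^ 2} = Iio (-Real.sqrt s) ∪ Ioi (Real.sqrt s) := by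
  ext x
  have h1 : s < x ^ 2 ↔ Real.sqrt s < Real.sqrt (x ^ 2) :=
    (Real.sqrt_lt_sqrt_iff hs.le).symm
  simp only [Set.mem_setOf_eq, Set.mem_union, Set.mem_Iio, Set.mem_Ioi]
  rw [h1, Real.sqrt_sq_eq_abs, lt_abs, or_comm]
  constructor
  · rintro (h | h)
    · left; linarith
    · right; exact h
  · rintro (h | h)
    · left; linarith
    · right; exact h

set_option maxHeartbeats 1000000 in
lemma weight_mono {A H : Set ℝ} (hAm : MeasurableSet A) (hHm : MeasurableSet H)
    (hA : A.OrdConnected) (hH : ∀ ⦃x⦄, x ∈ H → ∀ ⦃y⦄, y ≤ x → y ∈ H)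
    (hm : stdGaussian1 A = stdGaussian1 H) :
    ∫⁻ x in A, ENNReal.ofReal (x ^ 2) ∂stdGaussian1
      ≤ ∫⁻ x in H, ENNReal.ofReal (x ^ 2) ∂stdGaussian1 := by
  have hmble : Measurable (fun x : ℝ => x ^ 2) := measurable_id.pow_const 2
  have hnnA : 0 ≤ᵐ[stdGaussian1.restrict A] fun x : ℝ => x ^ 2 :=
    ae_of_all _ fun x => sq_nonneg x
  have hnnH : 0 ≤ᵐ[stdGaussian1.restrict H] fun x : ℝ => x ^ 2 :=
    ae_of_all _ fun x => sq_nonneg x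
  rw [lintegral_eq_lintegral_meas_lt _ hnnA hmble.aemeasurable,
    lintegral_eq_lintegral_meas_lt _ hnnH hmble.aemeasurable]
  refine lintegral_mono_ae ((ae_restrict_iff' measurableSet_Ioi).2 (ae_of_all _ fun s hs => ?_))
  have hsm : MeasurableSet {x : ℝ | s < x ^ 2} :=
    measurableSet_lt measurable_const (by fun_prop)
  rw [Measure.restrict_apply hsm, Measure.restrict_apply hsm,
    sq_levelset hs, Set.inter_comm _ A, Set.inter_comm _ H]
  exact key_ineq hAm hHm hA hH hm (Real.sqrt_nonneg s)

set_option maxHeartbeats 1000000 in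
lemma layer_repr (E : Set ℝ) (hE : MeasurableSet E) (h : ℝ → ℝ) (hhm : Measurable h)
    (hh0 : ∀ x ∈ E, 0 ≤ h x) :
    ∫⁻ x in E, ENNReal.ofReal (h x * x ^ 2) ∂stdGaussian1
      = ∫⁻ t in Ioi 0,
          ∫⁻ x in ({a : ℝ | t < h a} ∩ E), ENNReal.ofReal (x ^ 2) ∂stdGaussian1 := by
  set w : ℝ → ENNReal := fun x => ENNReal.ofReal (x ^ 2) with hw_def
  have hw : Measurable w := (measurable_id.pow_const 2).ennreal_ofReal
  have step1 : ∫⁻ x in E, ENNReal.ofReal (h x * x ^ 2) ∂stdGaussian1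
      = ∫⁻ x, ENNReal.ofReal (h x) ∂((stdGaussian1.restrict E).withDensity w) := by
    rw [lintegral_withDensity_eq_lintegral_mul _ hw hhm.ennreal_ofReal]
    refine lintegral_congr fun x => ?_
    simp only [hw_def, Pi.mul_apply]
    rw [mul_comm (h x), ENNReal.ofReal_mul (sq_nonneg x)]
  have hnn : 0 ≤ᵐ[(stdGaussian1.restrict E).withDensity w] h :=
    (withDensity_absolutelyContinuous _ w).ae_le
      ((ae_restrict_iff' hE).2 (ae_of_all _ hh0))
  rw [step1, lintegral_eq_lintegral_meas_lt _ hnn hhm.aemeasurable]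
  refine setLIntegral_congr_fun measurableSet_Ioi (fun t _ => ?_)
  rw [withDensity_apply _ (measurableSet_lt measurable_const hhm),
    Measure.restrict_restrict (measurableSet_lt measurable_const hhm)]

set_option maxHeartbeats 1000000 in
/-- One-dimensional Hardy–Littlewood-type principle for the weight `x²`: for a
nonnegative `f ∈ L²(γ₁, K)` on an interval `K` with connected level sets, and its
Ehrhard rearrangement `f*` on the half-line `H_K = (-∞, c]` of the same Gaussian
measure, `∫_K f(x) x² dγ₁ ≤ ∫_{H_K} f*(x) x² dγ₁`. -/
theorem stmt10 (K : Set ℝ) (hK : MeasurableSet K) (hKconn : K.OrdConnected)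
    (f fstar : ℝ → ℝ)
    (hf0 : ∀ x ∈ K, 0 ≤ f x) (hfs0 : ∀ x, 0 ≤ fstar x)
    (hfm : Measurable f) (hfsm : Measurable fstar)
    (hfL2 : MemLp f 2 (stdGaussian1.restrict K))
    (hlevconn : ∀ t : ℝ, ({x ∈ K | t < f x} : Set ℝ).OrdConnected)
    (c : ℝ) (hc : stdGaussian1 (Set.Iic c) = stdGaussian1 K)
    (hfanti : AntitoneOn fstar (Set.Iic c))
    (hflev : ∀ t : ℝ, 0 ≤ t →
      stdGaussian1 {x ∈ Set.Iic c | t < fstar x} = stdGaussian1 {x ∈ K | t < f x})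
    (hint1 : IntegrableOn (fun x => f x * x ^ 2) K stdGaussian1)
    (hint2 : IntegrableOn (fun x => fstar x * x ^ 2) (Set.Iic c) stdGaussian1) :
    (∫ x in K, f x * x ^ 2 ∂stdGaussian1)
      ≤ ∫ x in Set.Iic c, fstar x * x ^ 2 ∂stdGaussian1 := by
  have hmf : Measurable fun x : ℝ => f x * x ^ 2 := hfm.mul (measurable_id.pow_const 2)
  have hmfs : Measurable fun x : ℝ => fstar x * x ^ 2 := hfsm.mul (measurable_id.pow_const 2)
  have e1 : ∫ x in K, f x * x ^ 2 ∂stdGaussian1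
      = (∫⁻ x in K, ENNReal.ofReal (f x * x ^ 2) ∂stdGaussian1).toReal :=
    integral_eq_lintegral_of_nonneg_ae
      ((ae_restrict_iff' hK).2 (ae_of_all _ fun x hx => mul_nonneg (hf0 x hx) (sq_nonneg x)))
      hmf.aestronglyMeasurable
  have e2 : ∫ x in Set.Iic c, fstar x * x ^ 2 ∂stdGaussian1
      = (∫⁻ x in Set.Iic c, ENNReal.ofReal (fstar x * x ^ 2) ∂stdGaussian1).toReal :=
    integral_eq_lintegral_of_nonneg_ae
      (ae_of_all _ fun x => mul_nonneg (hfs0 x) (sq_nonneg x))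
      hmfs.aestronglyMeasurable
  rw [e1, e2]
  have hfin : ∫⁻ x in Set.Iic c, ENNReal.ofReal (fstar x * x ^ 2) ∂stdGaussian1 ≠ ⊤ :=
    ((hasFiniteIntegral_iff_ofReal
      (ae_of_all _ fun x => mul_nonneg (hfs0 x) (sq_nonneg x))).1
      hint2.hasFiniteIntegral).ne
  refine ENNReal.toReal_mono hfin ?_
  rw [layer_repr K hK f hfm hf0, layer_repr (Set.Iic c) measurableSet_Iic fstar hfsm
    (fun x _ => hfs0 x)]
  refine lintegral_mono_ae ((ae_restrict_iff' measurableSet_Ioi).2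
    (ae_of_all _ fun t ht => ?_))
  refine weight_mono ((measurableSet_lt measurable_const hfm).inter hK)
    ((measurableSet_lt measurable_const hfsm).inter measurableSet_Iic) ?_ ?_ ?_
  · have : {a : ℝ | t < f a} ∩ K = {x ∈ K | t < f x} := by
      ext x; simp only [Set.mem_inter_iff, Set.mem_setOf_eq, Set.mem_sep_iff]; tauto
    rw [this]
    exact hlevconn t
  · intro x hx y hyx
    have hxc : x ∈ Set.Iic c := hx.2
    have hyc : y ∈ Set.Iic c := le_trans hyx hxc
    exact ⟨lt_of_lt_of_le hx.1 (hfanti hyc hxc hyx), hyc⟩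
  · have hA : {a : ℝ | t < f a} ∩ K = {x ∈ K | t < f x} := by
      ext x; simp only [Set.mem_inter_iff, Set.mem_setOf_eq, Set.mem_sep_iff]; tauto
    have hB : {a : ℝ | t < fstar a} ∩ Set.Iic c = {x ∈ Set.Iic c | t < fstar x} := by
      ext x; simp only [Set.mem_inter_iff, Set.mem_setOf_eq, Set.mem_sep_iff]; tauto
    rw [hA, hB]
    exact (hflev t (le_of_lt ht)).symm
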